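/- Let L ≥ 0 and let 0 ≤ t1 < t2 ≤ 2^L be integers. Then there exists a vector χ indexed by pairs (j,l) with 0 ≤ l ≤ L and 1 ≤ j ≤ 2^(L-l), taking values in {-1,0,1}, with at most L+1 nonzero entries, such that the indicator function of the interval [t1+1, t2] equals the sum over (j,l) of χ_{j,l} times the indicator of the dyadic interval [(j-1)·2^l+1, j·2^l]. -/

import Mathlib

/-- indicator of the integer interval [a,b] as a real-valued function on ℤ -/
def intervalInd (a b : ℤ) (x : ℤ) : ℝ := if a ≤ x ∧ x ≤ b then 1 else 0

/-- index set of the dyadic family at level L with offset 0 -/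
def dyadicIdx (L : ℕ) : Finset (ℕ × ℕ) :=
  (Finset.Icc 1 (2 ^ L) ×ˢ Finset.Icc 0 L).filter (fun p => p.1 ≤ 2 ^ (L - p.2))


/-- dyadic indicator -/
def dyadInd (p : ℕ × ℕ) (x : ℤ) : ℝ :=
  intervalInd (((p.1 : ℤ) - 1) * 2 ^ p.2 + 1) ((p.1 : ℤ) * 2 ^ p.2) x

def RepOn (T : Finset (ℕ × ℕ)) (n : ℕ) (f : ℤ → ℝ) : Prop :=
  ∃ s : Finset (ℕ × ℕ), ∃ σ : ℕ × ℕ → ℤ, s ⊆ T ∧ s.card ≤ n ∧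
    (∀ p ∈ s, σ p = 1 ∨ σ p = -1) ∧
    ∀ x : ℤ, f x = ∑ p ∈ s, (σ p : ℝ) * dyadInd p x

lemma mem_dyadicIdx {L : ℕ} {p : ℕ × ℕ} :
    p ∈ dyadicIdx L ↔ 1 ≤ p.1 ∧ p.2 ≤ L ∧ p.1 ≤ 2 ^ (L - p.2) := by
  unfold dyadicIdx
  simp only [Finset.mem_filter, Finset.mem_product, Finset.mem_Icc]
  constructor
  · rintro ⟨⟨⟨h1, h2⟩, _, h4⟩, h5⟩; exact ⟨h1, h4, h5⟩
  · rintro ⟨h1, h2, h3⟩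
    refine ⟨⟨⟨h1, le_trans h3 ?_⟩, Nat.zero_le _, h2⟩, h3⟩
    exact Nat.pow_le_pow_right (by norm_num) (Nat.sub_le _ _)

lemma dyadicIdx_subset {L M : ℕ} (h : L ≤ M) : dyadicIdx L ⊆ dyadicIdx M := by
  intro p hp
  rw [mem_dyadicIdx] at hp ⊢
  exact ⟨hp.1, le_trans hp.2.1 h, le_trans hp.2.2
    (Nat.pow_le_pow_right (by norm_num) (by omega))⟩

lemma level_le_of_mem {L : ℕ} {p : ℕ × ℕ} (h : p ∈ dyadicIdx L) : p.2 ≤ L :=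
  (mem_dyadicIdx.1 h).2.1

lemma repOn_mono {T T' : Finset (ℕ × ℕ)} {n n' : ℕ} {f : ℤ → ℝ}
    (hT : T ⊆ T') (hn : n ≤ n') (h : RepOn T n f) : RepOn T' n' f := by
  obtain ⟨s, σ, h1, h2, h3, h4⟩ := h
  exact ⟨s, σ, h1.trans hT, h2.trans hn, h3, h4⟩

lemma repOn_congr {T : Finset (ℕ × ℕ)} {n : ℕ} {f g : ℤ → ℝ}
    (h : RepOn T n f) (hfg : ∀ x, f x = g x) : RepOn T n g := by
  obtain ⟨s, σ, h1, h2, h3, h4⟩ := h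
  exact ⟨s, σ, h1, h2, h3, fun x => (hfg x) ▸ h4 x⟩

lemma repOn_single {p : ℕ × ℕ} {T : Finset (ℕ × ℕ)} (h : p ∈ T) :
    RepOn T 1 (dyadInd p) := by
  refine ⟨{p}, fun _ => 1, Finset.singleton_subset_iff.2 h, by simp, by simp, ?_⟩
  intro x; simp

lemma repOn_addMul {T₁ T₂ : Finset (ℕ × ℕ)} {n₁ n₂ : ℕ} {f g : ℤ → ℝ}
    (hd : Disjoint T₁ T₂) (ε : ℤ) (hε : ε = 1 ∨ ε = -1)
    (h1 : RepOn T₁ n₁ f) (h2 : RepOn T₂ n₂ g) :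
    RepOn (T₁ ∪ T₂) (n₁ + n₂) (fun x => f x + (ε : ℝ) * g x) := by
  obtain ⟨s₁, σ₁, hs₁, hc₁, hv₁, he₁⟩ := h1
  obtain ⟨s₂, σ₂, hs₂, hc₂, hv₂, he₂⟩ := h2
  have hdisj : Disjoint s₁ s₂ := hd.mono hs₁ hs₂
  refine ⟨s₁ ∪ s₂, fun p => if p ∈ s₂ then ε * σ₂ p else σ₁ p,
    Finset.union_subset (hs₁.trans Finset.subset_union_left)
      (hs₂.trans Finset.subset_union_right), ?_, ?_, ?_⟩
  · calc (s₁ ∪ s₂).card ≤ s₁.card + s₂.card := Finset.card_union_le _ _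
      _ ≤ n₁ + n₂ := Nat.add_le_add hc₁ hc₂
  · intro p hp
    by_cases h : p ∈ s₂
    · simp only [h, if_true]
      rcases hε with rfl | rfl <;> rcases hv₂ p h with h' | h' <;> simp [h']
    · simp only [h, if_false]
      exact hv₁ p (by rcases Finset.mem_union.1 hp with h' | h'; exact h'; exact absurd h' h)
  · intro x
    show f x + (ε : ℝ) * g x = _
    rw [Finset.sum_union hdisj, he₁ x, he₂ x, Finset.mul_sum]
    congr 1
    · apply Finset.sum_congr rfl
      intro p hp
      have : p ∉ s₂ := Finset.disjoint_left.1 hdisj hp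
      simp [this]
    · apply Finset.sum_congr rfl
      intro p hp
      simp only [hp, if_true]
      push_cast
      ring

/-- shift an index to the right sibling copy at level L+1 -/
def shiftIdx (L : ℕ) (p : ℕ × ℕ) : ℕ × ℕ := (p.1 + 2 ^ (L - p.2), p.2)

lemma shiftIdx_inj (L : ℕ) : Function.Injective (shiftIdx L) := by
  intro p q h
  simp only [shiftIdx, Prod.mk.injEq] at h
  obtain ⟨h1, h2⟩ := h
  rw [h2] at h1
  exact Prod.ext (by omega) h2

lemma shiftIdx_mem {L : ℕ} {p : ℕ × ℕ} (h : p ∈ dyadicIdx L) :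
    shiftIdx L p ∈ dyadicIdx (L + 1) := by
  rw [mem_dyadicIdx] at h ⊢
  obtain ⟨h1, h2, h3⟩ := h
  refine ⟨by simp [shiftIdx]; omega, by simp [shiftIdx]; omega, ?_⟩
  show p.1 + 2 ^ (L - p.2) ≤ 2 ^ (L + 1 - p.2)
  have : 2 ^ (L + 1 - p.2) = 2 ^ (L - p.2) + 2 ^ (L - p.2) := by
    have : L + 1 - p.2 = (L - p.2) + 1 := by omega
    rw [this, pow_succ]; ring
  omega

lemma shiftIdx_fst {L : ℕ} (p : ℕ × ℕ) : 2 ≤ (shiftIdx L p).1 ∨ p.1 = 0 := by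
  unfold shiftIdx
  have : 1 ≤ 2 ^ (L - p.2) := Nat.one_le_two_pow
  simp only []
  omega

lemma two_pow_cast (L l : ℕ) (h : l ≤ L) :
    ((2 : ℤ) ^ (L - l)) * 2 ^ l = 2 ^ L := by
  rw [← pow_add]
  congr 1
  omega

lemma dyadInd_shift {L : ℕ} {p : ℕ × ℕ} (hp : p.2 ≤ L) (x : ℤ) :
    dyadInd (shiftIdx L p) x = dyadInd p (x - 2 ^ L) := by
  unfold dyadInd shiftIdx intervalInd
  have key : ((2 : ℤ) ^ (L - p.2)) * 2 ^ p.2 = 2 ^ L := two_pow_cast L p.2 hp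
  have c1 : ((p.1 + 2 ^ (L - p.2) : ℕ) : ℤ) = (p.1 : ℤ) + 2 ^ (L - p.2) := by push_cast; ring
  simp only [c1]
  have e1 : ((p.1 : ℤ) + 2 ^ (L - p.2) - 1) * 2 ^ p.2 + 1
      = ((p.1 : ℤ) - 1) * 2 ^ p.2 + 2 ^ L + 1 := by rw [← key]; ring
  have e2 : ((p.1 : ℤ) + 2 ^ (L - p.2)) * 2 ^ p.2 = (p.1 : ℤ) * 2 ^ p.2 + 2 ^ L := by
    rw [← key]; ring
  rw [e1, e2]
  have : (((p.1 : ℤ) - 1) * 2 ^ p.2 + 2 ^ L + 1 ≤ x ∧ x ≤ (p.1 : ℤ) * 2 ^ p.2 + 2 ^ L)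
      ↔ (((p.1 : ℤ) - 1) * 2 ^ p.2 + 1 ≤ x - 2 ^ L ∧ x - 2 ^ L ≤ (p.1 : ℤ) * 2 ^ p.2) := by
    constructor <;> intro h <;> omega
  simp only [this]

lemma repOn_shift {T : Finset (ℕ × ℕ)} {n : ℕ} {f : ℤ → ℝ} {L : ℕ}
    (hT : T ⊆ dyadicIdx L) (h : RepOn T n f) :
    RepOn (T.image (shiftIdx L)) n (fun x => f (x - 2 ^ L)) := by
  obtain ⟨s, σ, hs, hc, hv, he⟩ := h
  refine ⟨s.image (shiftIdx L), fun q => σ (q.1 - 2 ^ (L - q.2), q.2),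
    Finset.image_subset_image hs, ?_, ?_, ?_⟩
  · rw [Finset.card_image_of_injective _ (shiftIdx_inj L)]; exact hc
  · intro q hq
    obtain ⟨p, hp, rfl⟩ := Finset.mem_image.1 hq
    have : ((shiftIdx L p).1 - 2 ^ (L - (shiftIdx L p).2), (shiftIdx L p).2) = p := by
      unfold shiftIdx
      exact Prod.ext (by simp) rfl
    simpa [this] using hv p hp
  · intro x
    rw [Finset.sum_image (fun p _ q _ h => shiftIdx_inj L h)]
    show f (x - 2 ^ L) = _
    rw [he (x - 2 ^ L)]
    apply Finset.sum_congr rfl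
    intro p hp
    have hpl : p.2 ≤ L := level_le_of_mem (hT (hs hp))
    have : ((shiftIdx L p).1 - 2 ^ (L - (shiftIdx L p).2), (shiftIdx L p).2) = p := by
      unfold shiftIdx; exact Prod.ext (by simp) rfl
    simp only [this, dyadInd_shift hpl]

lemma ind_split (a c b x : ℤ) (h1 : a ≤ c + 1) (h2 : c ≤ b) :
    intervalInd a b x = intervalInd a c x + intervalInd (c + 1) b x := by
  unfold intervalInd
  split_ifs <;> (try norm_num) <;> omega

lemma ind_shift (a b s x : ℤ) :
    intervalInd (a + s) (b + s) x = intervalInd a b (x - s) := by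
  unfold intervalInd
  have : (a + s ≤ x ∧ x ≤ b + s) ↔ (a ≤ x - s ∧ x - s ≤ b) := by omega
  simp [this]

lemma dyadInd_one (l : ℕ) (x : ℤ) : dyadInd (1, l) x = intervalInd 1 (2 ^ l) x := by
  unfold dyadInd
  norm_num

lemma dyadInd_two (l : ℕ) (x : ℤ) :
    dyadInd (2, l) x = intervalInd (2 ^ l + 1) (2 ^ (l + 1)) x := by
  unfold dyadInd
  norm_num [pow_succ]
  ring_nf

lemma dyadInd_four (l : ℕ) (x : ℤ) :
    dyadInd (4, l) x = intervalInd (3 * 2 ^ l + 1) (2 ^ (l + 2)) x := by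
  unfold dyadInd
  norm_num [pow_succ]
  ring_nf

/-- dyadic index set minus the top node -/
def Dm (L : ℕ) : Finset (ℕ × ℕ) := (dyadicIdx L).erase (1, L)

lemma Dm_subset (L : ℕ) : Dm L ⊆ dyadicIdx L := Finset.erase_subset _ _

lemma subset_Dm {L M : ℕ} (h : L < M) : dyadicIdx L ⊆ Dm M := by
  intro p hp
  refine Finset.mem_erase.2 ⟨?_, dyadicIdx_subset (le_of_lt h) hp⟩
  intro hpe
  have := level_le_of_mem hp
  rw [hpe] at this
  omega

lemma top_mem {L M : ℕ} (h : L ≤ M) : ((1 : ℕ), L) ∈ dyadicIdx M := by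
  rw [mem_dyadicIdx]
  exact ⟨le_refl 1, h, Nat.one_le_two_pow⟩

lemma image_shift_subset {T : Finset (ℕ × ℕ)} {L : ℕ} (hT : T ⊆ dyadicIdx L) :
    T.image (shiftIdx L) ⊆ Dm (L + 1) := by
  intro q hq
  obtain ⟨p, hp, rfl⟩ := Finset.mem_image.1 hq
  refine Finset.mem_erase.2 ⟨?_, shiftIdx_mem (hT hp)⟩
  intro hcontra
  have h1 : (shiftIdx L p).1 = 1 := by rw [hcontra]
  have h2 : 1 ≤ p.1 := (mem_dyadicIdx.1 (hT hp)).1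
  have : 1 ≤ 2 ^ (L - p.2) := Nat.one_le_two_pow
  unfold shiftIdx at h1
  simp only [] at h1
  omega

lemma image_shift_disjoint {T : Finset (ℕ × ℕ)} {L : ℕ} (hT : T ⊆ dyadicIdx L) :
    Disjoint (dyadicIdx L) (T.image (shiftIdx L)) := by
  rw [Finset.disjoint_right]
  intro q hq hq'
  obtain ⟨p, hp, rfl⟩ := Finset.mem_image.1 hq
  have hpm := hT hp
  rw [mem_dyadicIdx] at hpm hq'
  have : (shiftIdx L p).1 = p.1 + 2 ^ (L - p.2) := rfl
  have h2 : (shiftIdx L p).2 = p.2 := rfl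
  rw [this, h2] at hq'
  omega

lemma not_mem_image_shift_of_fst_one {T : Finset (ℕ × ℕ)} {L : ℕ} {j l : ℕ}
    (hT : T ⊆ dyadicIdx L) (hj : j = 1) : (j, l) ∉ T.image (shiftIdx L) := by
  intro h
  obtain ⟨p, hp, hpe⟩ := Finset.mem_image.1 h
  have h1 : p.1 + 2 ^ (L - p.2) = j := congrArg Prod.fst hpe
  have h3 : 1 ≤ p.1 := (mem_dyadicIdx.1 (hT hp)).1
  have : 1 ≤ 2 ^ (L - p.2) := Nat.one_le_two_pow
  omega

def preInd (t : ℕ) : ℤ → ℝ := fun x => intervalInd 1 (t : ℤ) x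
def sufInd (L t : ℕ) : ℤ → ℝ := fun x => intervalInd ((t : ℤ) + 1) (2 ^ L) x

lemma cast_two_pow (L : ℕ) : ((2 ^ L : ℕ) : ℤ) = 2 ^ L := by push_cast; ring

lemma two_top_not_mem (L : ℕ) : ((2 : ℕ), L) ∉ dyadicIdx L := by
  rw [mem_dyadicIdx]
  simp

lemma two_succ_mem (L : ℕ) : ((2 : ℕ), L) ∈ dyadicIdx (L + 1) := by
  rw [mem_dyadicIdx]
  refine ⟨by norm_num, by omega, ?_⟩
  simp

/-- prefix = whole - suffix -/
lemma pre_of_suf {L t n : ℕ} (ht : t ≤ 2 ^ L) (h : RepOn (Dm L) n (sufInd L t)) :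
    RepOn (dyadicIdx L) (n + 1) (preInd t) := by
  have h1 : RepOn {((1 : ℕ), L)} 1 (dyadInd (1, L)) :=
    repOn_single (Finset.mem_singleton_self _)
  have hd : Disjoint {((1 : ℕ), L)} (Dm L) := by
    simp [Finset.disjoint_singleton_left, Dm]
  have h2 := repOn_addMul hd (-1) (Or.inr rfl) h1 h
  refine repOn_mono ?_ (by omega) (repOn_congr h2 ?_)
  · exact Finset.union_subset (Finset.singleton_subset_iff.2 (top_mem (le_refl L)))
      (Dm_subset L)
  · intro x
    have hs := ind_split 1 (t : ℤ) (2 ^ L) x (by omega)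
      (by rw [← cast_two_pow]; exact_mod_cast ht)
    rw [dyadInd_one]
    show intervalInd 1 (2 ^ L) x + (((-1 : ℤ) : ℝ)) * sufInd L t x = preInd t x
    unfold sufInd preInd
    push_cast
    linarith

/-- suffix = whole - prefix -/
lemma suf_of_pre {L t n : ℕ} (ht : t ≤ 2 ^ L) (h : RepOn (Dm L) n (preInd t)) :
    RepOn (dyadicIdx L) (n + 1) (sufInd L t) := by
  have h1 : RepOn {((1 : ℕ), L)} 1 (dyadInd (1, L)) :=
    repOn_single (Finset.mem_singleton_self _)
  have hd : Disjoint {((1 : ℕ), L)} (Dm L) := by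
    simp [Finset.disjoint_singleton_left, Dm]
  have h2 := repOn_addMul hd (-1) (Or.inr rfl) h1 h
  refine repOn_mono ?_ (by omega) (repOn_congr h2 ?_)
  · exact Finset.union_subset (Finset.singleton_subset_iff.2 (top_mem (le_refl L)))
      (Dm_subset L)
  · intro x
    have hs := ind_split 1 (t : ℤ) (2 ^ L) x (by omega)
      (by rw [← cast_two_pow]; exact_mod_cast ht)
    rw [dyadInd_one]
    show intervalInd 1 (2 ^ L) x + (((-1 : ℤ) : ℝ)) * preInd t x = sufInd L t x
    unfold sufInd preInd
    push_cast
    linarith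

/-- prefix crossing the midpoint : [1, t'+2^Λ] = [1,2^Λ] + shifted [1,t'] -/
lemma pre_split {Λ n t' : ℕ} {T : Finset (ℕ × ℕ)} (hT : T ⊆ dyadicIdx Λ)
    (h : RepOn T n (preInd t')) :
    RepOn ({((1 : ℕ), Λ)} ∪ T.image (shiftIdx Λ)) (1 + n) (preInd (t' + 2 ^ Λ)) := by
  have h1 : RepOn {((1 : ℕ), Λ)} 1 (dyadInd (1, Λ)) :=
    repOn_single (Finset.mem_singleton_self _)
  have h2 := repOn_shift hT h
  have hd : Disjoint {((1 : ℕ), Λ)} (T.image (shiftIdx Λ)) :=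
    Finset.disjoint_singleton_left.2 (not_mem_image_shift_of_fst_one hT rfl)
  have h3 := repOn_addMul hd 1 (Or.inl rfl) h1 h2
  refine repOn_congr h3 ?_
  intro x
  rw [dyadInd_one]
  show intervalInd 1 (2 ^ Λ) x + ((1 : ℤ) : ℝ) * preInd t' (x - 2 ^ Λ) = _
  unfold preInd
  have hs := ind_split 1 ((2 : ℤ) ^ Λ) ((t' : ℤ) + 2 ^ Λ) x
    (by linarith [pow_pos (show (0:ℤ) < 2 by norm_num) Λ])
    (by linarith [Int.natCast_nonneg t'])
  have hsh := ind_shift 1 (t' : ℤ) ((2 : ℤ) ^ Λ) x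
  push_cast
  push_cast at hs hsh
  rw [show ((2 : ℤ) ^ Λ + 1) = (1 + 2 ^ Λ) by ring] at hs
  rw [show ((t' : ℤ) + 2 ^ Λ) = ((t' : ℤ) + 2 ^ Λ) by ring] at hs
  linarith [hs, hsh]

/-- shifting a suffix of the left half gives a suffix of the whole -/
lemma suf_shift {Λ n t' : ℕ} {T : Finset (ℕ × ℕ)} (hT : T ⊆ dyadicIdx Λ)
    (h : RepOn T n (sufInd Λ t')) :
    RepOn (T.image (shiftIdx Λ)) n (sufInd (Λ + 1) (t' + 2 ^ Λ)) := by
  refine repOn_congr (repOn_shift hT h) ?_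
  intro x
  show sufInd Λ t' (x - 2 ^ Λ) = _
  unfold sufInd
  have hsh := ind_shift ((t' : ℤ) + 1) ((2 : ℤ) ^ Λ) ((2 : ℤ) ^ Λ) x
  push_cast
  rw [← hsh]
  congr 1 <;> ring

/-- extending a suffix of the left half by the right half block -/
lemma suf_extend {Λ n t' : ℕ} {T : Finset (ℕ × ℕ)} (hT : T ⊆ dyadicIdx Λ)
    (ht' : t' ≤ 2 ^ Λ) (h : RepOn T n (sufInd Λ t')) :
    RepOn (T ∪ {((2 : ℕ), Λ)}) (n + 1) (sufInd (Λ + 1) t') := by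
  have h1 : RepOn {((2 : ℕ), Λ)} 1 (dyadInd (2, Λ)) :=
    repOn_single (Finset.mem_singleton_self _)
  have hd : Disjoint T {((2 : ℕ), Λ)} :=
    Finset.disjoint_singleton_right.2 (fun hmem => two_top_not_mem Λ (hT hmem))
  have h3 := repOn_addMul hd 1 (Or.inl rfl) h h1
  refine repOn_congr h3 ?_
  intro x
  rw [dyadInd_two]
  show sufInd Λ t' x + ((1 : ℤ) : ℝ) * intervalInd (2 ^ Λ + 1) (2 ^ (Λ + 1)) x = _
  unfold sufInd
  have hs := ind_split ((t' : ℤ) + 1) ((2 : ℤ) ^ Λ) ((2 : ℤ) ^ (Λ + 1)) x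
    (by have : (t' : ℤ) ≤ 2 ^ Λ := by rw [← cast_two_pow]; exact_mod_cast ht'
        omega)
    (by rw [pow_succ]; nlinarith [pow_pos (by norm_num : (0:ℤ) < 2) Λ])
  push_cast
  linarith

def Pprop (L : ℕ) : Prop := ∀ t : ℕ, 0 < t → t < 2 ^ L →
  RepOn (Dm L) ((L + 1) / 2) (preInd t) ∨ RepOn (Dm L) ((L + 1) / 2) (sufInd L t)

lemma P_zero : Pprop 0 := by
  intro t h1 h2
  norm_num at h2
  omega

lemma P_one : Pprop 1 := by
  intro t h1 h2
  norm_num at h2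
  have ht : t = 1 := by omega
  subst ht
  left
  have hmem : ((1 : ℕ), 0) ∈ Dm 1 := by
    refine Finset.mem_erase.2 ⟨by simp, ?_⟩
    rw [mem_dyadicIdx]; norm_num
  refine repOn_mono (le_refl _) (by norm_num) (repOn_congr (repOn_single hmem) ?_)
  intro x
  rw [dyadInd_one]
  unfold preInd
  norm_num

lemma P_step (L : ℕ) (ih : Pprop L) : Pprop (L + 2) := by
  intro t ht0 htU
  have hbud : (L + 2 + 1) / 2 = (L + 1) / 2 + 1 := by omega
  set m := (L + 1) / 2 with hm
  rw [hbud]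
  have e1 : 2 ^ (L + 1) = 2 * 2 ^ L := by rw [pow_succ]; ring
  have e2 : 2 ^ (L + 2) = 4 * 2 ^ L := by rw [pow_succ, pow_succ]; ring
  have hNpos : 0 < 2 ^ L := Nat.pow_pos (by norm_num)
  by_cases hc1 : t < 2 ^ L
  · -- Case 1
    rcases ih t ht0 hc1 with hpre | hsuf
    · exact Or.inl (repOn_mono ((Dm_subset L).trans (subset_Dm (by omega)))
        (by omega) hpre)
    · exact Or.inl (repOn_mono (subset_Dm (by omega)) (by omega)
        (pre_of_suf (le_of_lt hc1) hsuf))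
  by_cases hc2 : t = 2 ^ L
  · -- Case 2
    left
    have hmem : ((1 : ℕ), L) ∈ Dm (L + 2) := subset_Dm (by omega) (top_mem (le_refl L))
    refine repOn_mono (le_refl _) (by omega) (repOn_congr (repOn_single hmem) ?_)
    intro x
    rw [dyadInd_one]
    unfold preInd
    rw [hc2, cast_two_pow]
  by_cases hc3 : t < 2 ^ (L + 1)
  · -- Case 3 : 2^L < t < 2^(L+1)
    set t' := t - 2 ^ L with ht'
    have htt : t = t' + 2 ^ L := by omega
    have ht'0 : 0 < t' := by omega
    have ht'U : t' < 2 ^ L := by omega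
    rcases ih t' ht'0 ht'U with hpre | hsuf
    · left
      have h := pre_split (Dm_subset L) hpre
      rw [← htt] at h
      refine repOn_mono ?_ (by omega) h
      apply Finset.union_subset
      · exact Finset.singleton_subset_iff.2 (subset_Dm (by omega) (top_mem (le_refl L)))
      · exact (image_shift_subset (Dm_subset L)).trans
          ((Dm_subset (L + 1)).trans (subset_Dm (by omega)))
    · right
      have h := suf_shift (Dm_subset L) hsuf
      have h2 := suf_extend (Λ := L + 1)
        ((image_shift_subset (Dm_subset L)).trans (Dm_subset (L + 1)))
        (by omega) h
      rw [← htt] at h2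
      refine repOn_mono ?_ (by omega) h2
      apply Finset.union_subset
      · exact (image_shift_subset (Dm_subset L)).trans
          ((Dm_subset (L + 1)).trans (subset_Dm (by omega)))
      · refine Finset.singleton_subset_iff.2 (Finset.mem_erase.2 ⟨by simp, ?_⟩)
        exact two_succ_mem (L + 1)
  by_cases hc4 : t = 2 ^ (L + 1)
  · -- Case 4
    left
    have hmem : ((1 : ℕ), L + 1) ∈ Dm (L + 2) :=
      subset_Dm (by omega) (top_mem (le_refl (L + 1)))
    refine repOn_mono (le_refl _) (by omega) (repOn_congr (repOn_single hmem) ?_)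
    intro x
    rw [dyadInd_one]
    unfold preInd
    rw [hc4, cast_two_pow]
  by_cases hc5 : t = 3 * 2 ^ L
  · -- Case 5
    right
    have hmem : ((4 : ℕ), L) ∈ Dm (L + 2) := by
      refine Finset.mem_erase.2 ⟨by simp, ?_⟩
      rw [mem_dyadicIdx]
      refine ⟨by norm_num, by omega, ?_⟩
      have h22 : L + 2 - L = 2 := by omega
      rw [h22]
      norm_num
    refine repOn_mono (le_refl _) (by omega) (repOn_congr (repOn_single hmem) ?_)
    intro x
    rw [dyadInd_four]
    unfold sufInd
    congr 1
    push_cast [hc5]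
    ring
  by_cases hc6 : t < 3 * 2 ^ L
  · -- Case 6 : 2^(L+1) < t < 3*2^L
    set t' := t - 2 ^ (L + 1) with ht'
    have htt : t = t' + 2 ^ (L + 1) := by omega
    have ht'0 : 0 < t' := by omega
    have ht'U : t' < 2 ^ L := by omega
    rcases ih t' ht'0 ht'U with hpre | hsuf
    · left
      have h := pre_split (Λ := L + 1) ((Dm_subset L).trans (dyadicIdx_subset (by omega))) hpre
      rw [← htt] at h
      refine repOn_mono ?_ (by omega) h
      apply Finset.union_subset
      · exact Finset.singleton_subset_iff.2 (subset_Dm (by omega) (top_mem (le_refl (L + 1))))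
      · exact image_shift_subset ((Dm_subset L).trans (dyadicIdx_subset (by omega)))
    · right
      have h := suf_extend (Dm_subset L) (by omega) hsuf
      have hT2 : Dm L ∪ {((2 : ℕ), L)} ⊆ dyadicIdx (L + 1) := by
        apply Finset.union_subset
        · exact (Dm_subset L).trans (dyadicIdx_subset (by omega))
        · exact Finset.singleton_subset_iff.2 (two_succ_mem L)
      have h2 := suf_shift hT2 h
      rw [show t' + 2 ^ (L + 1) = t by omega] at h2
      exact repOn_mono (image_shift_subset hT2) (by omega) h2
  · -- Case 7 : 3*2^L < t < 2^(L+2)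
    right
    set t'' := t - 3 * 2 ^ L with ht''
    have htt : t = t'' + 2 ^ L + 2 ^ (L + 1) := by omega
    have ht''0 : 0 < t'' := by omega
    have ht''U : t'' < 2 ^ L := by omega
    have hS : RepOn (dyadicIdx L) (m + 1) (sufInd L t'') := by
      rcases ih t'' ht''0 ht''U with hpre | hsuf
      · exact suf_of_pre (le_of_lt ht''U) hpre
      · exact repOn_mono (Dm_subset L) (by omega) hsuf
    have h1 := suf_shift (le_refl (dyadicIdx L)) hS
    have hT1 : (dyadicIdx L).image (shiftIdx L) ⊆ dyadicIdx (L + 1) :=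
      (image_shift_subset (le_refl _)).trans (Dm_subset (L + 1))
    have h2 := suf_shift hT1 h1
    rw [show t'' + 2 ^ L + 2 ^ (L + 1) = t by omega] at h2
    exact repOn_mono (image_shift_subset hT1) (by omega) h2

lemma P_all : ∀ L, Pprop L := by
  intro L
  induction L using Nat.strong_induction_on with
  | _ L ih =>
    match L with
    | 0 => exact P_zero
    | 1 => exact P_one
    | (n + 2) => exact P_step n (ih n (by omega))

lemma prefix_full (L t : ℕ) (ht0 : 0 < t) (ht : t < 2 ^ L) :
    RepOn (dyadicIdx L) ((L + 1) / 2 + 1) (preInd t) := by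
  rcases P_all L t ht0 ht with h | h
  · exact repOn_mono (Dm_subset L) (by omega) h
  · exact pre_of_suf (le_of_lt ht) h

lemma suffix_full (L t : ℕ) (ht0 : 0 < t) (ht : t < 2 ^ L) :
    RepOn (dyadicIdx L) ((L + 1) / 2 + 1) (sufInd L t) := by
  rcases P_all L t ht0 ht with h | h
  · exact suf_of_pre (le_of_lt ht) h
  · exact repOn_mono (Dm_subset L) (by omega) h

lemma gen : ∀ L (a b : ℕ), a < b → b ≤ 2 ^ L →
    RepOn (dyadicIdx L) (L + 1) (fun x => intervalInd ((a : ℤ) + 1) (b : ℤ) x) := by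
  intro L
  induction L with
  | zero =>
    intro a b hab hb
    norm_num at hb
    have ha : a = 0 := by omega
    have hb1 : b = 1 := by omega
    subst ha; subst hb1
    refine repOn_congr (repOn_single (top_mem (le_refl 0))) ?_
    intro x
    rw [dyadInd_one]
    norm_num
  | succ L ihL =>
    intro a b hab hb
    have e1 : 2 ^ (L + 1) = 2 * 2 ^ L := by rw [pow_succ]; ring
    have hNpos : 0 < 2 ^ L := Nat.pow_pos (by norm_num)
    have hcast : ((2 ^ L : ℕ) : ℤ) = 2 ^ L := cast_two_pow L
    by_cases hb1 : b ≤ 2 ^ L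
    · exact repOn_mono (dyadicIdx_subset (by omega)) (by omega) (ihL a b hab hb1)
    by_cases ha1 : 2 ^ L ≤ a
    · -- entirely in right half
      set a' := a - 2 ^ L with ha'
      set b' := b - 2 ^ L with hb'
      have h := repOn_shift (le_refl (dyadicIdx L)) (ihL a' b' (by omega) (by omega))
      refine repOn_mono ((image_shift_subset (le_refl _)).trans (Dm_subset (L+1)))
        (by omega) (repOn_congr h ?_)
      intro x
      show intervalInd ((a' : ℤ) + 1) (b' : ℤ) (x - 2 ^ L) = _
      rw [← ind_shift]
      congr 1
      · push_cast [ha']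
        rw [Nat.cast_sub ha1]
        push_cast
        ring
      · push_cast [hb']
        rw [Nat.cast_sub (by omega)]
        push_cast
        ring
    -- now a < 2^L < b
    by_cases hb2 : b = 2 ^ (L + 1)
    · by_cases ha0 : a = 0
      · -- whole interval
        subst ha0
        refine repOn_congr (repOn_mono (le_refl _) (by omega)
          (repOn_single (top_mem (le_refl (L + 1))))) ?_
        intro x
        rw [dyadInd_one]
        rw [hb2, cast_two_pow]
        norm_num
      · -- proper suffix
        have h := suf_extend (le_refl (dyadicIdx L)) (by omega)
          (suffix_full L a (by omega) (by omega))
        refine repOn_mono ?_ (by omega) (repOn_congr h ?_)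
        · apply Finset.union_subset
          · exact dyadicIdx_subset (by omega)
          · exact Finset.singleton_subset_iff.2 (two_succ_mem L)
        · intro x
          unfold sufInd
          rw [hb2, cast_two_pow]
    · -- b < 2^(L+1), b > 2^L
      set b' := b - 2 ^ L with hb'
      have hb'0 : 0 < b' := by omega
      have hb'U : b' < 2 ^ L := by omega
      have hbb : b' + 2 ^ L = b := by omega
      have hcastb : (b : ℤ) = (b' : ℤ) + 2 ^ L := by
        rw [hb', Nat.cast_sub (by omega)]; push_cast; ring
      by_cases ha0 : a = 0
      · -- prefix crossing the midpoint
        subst ha0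
        have h := pre_split (le_refl (dyadicIdx L)) (prefix_full L b' hb'0 hb'U)
        rw [hbb] at h
        refine repOn_mono ?_ (by omega) (repOn_congr h ?_)
        · apply Finset.union_subset
          · exact Finset.singleton_subset_iff.2 (top_mem (by omega))
          · exact (image_shift_subset (le_refl _)).trans (Dm_subset (L + 1))
        · intro x
          unfold preInd
          norm_num
      · -- spanning case, a > 0
        have haL : a < 2 ^ L := by omega
        have hsplit : ∀ x : ℤ, intervalInd ((a : ℤ) + 1) (b : ℤ) x
            = sufInd L a x + preInd b' (x - 2 ^ L) := by
          intro x
          have hs := ind_split ((a : ℤ) + 1) ((2 : ℤ) ^ L) (b : ℤ) x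
            (by have : (a : ℤ) ≤ 2 ^ L := by rw [← hcast]; exact_mod_cast le_of_lt haL
                omega)
            (by rw [hcastb]; linarith [Int.natCast_nonneg b'])
          have hsh := ind_shift 1 (b' : ℤ) ((2 : ℤ) ^ L) x
          unfold sufInd preInd
          rw [hs, ← hsh, hcastb]
          congr 2
          ring
        have hcomp : ∀ x : ℤ, intervalInd ((a : ℤ) + 1) (b : ℤ) x
            = dyadInd (1, L + 1) x + (-1 : ℝ) * (preInd a x + (1:ℝ) * sufInd L b' (x - 2 ^ L)) := by
          intro x
          have h1 := ind_split 1 (a : ℤ) ((2 : ℤ) ^ (L + 1)) x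
            (by linarith [Int.natCast_nonneg a])
            (by rw [← cast_two_pow]; exact_mod_cast (by omega : a ≤ 2 ^ (L + 1)))
          have h2 := ind_split ((a : ℤ) + 1) (b : ℤ) ((2 : ℤ) ^ (L + 1)) x
            (by omega)
            (by rw [← cast_two_pow]; exact_mod_cast hb)
          have hsh := ind_shift ((b' : ℤ) + 1) ((2 : ℤ) ^ L) ((2 : ℤ) ^ L) x
          rw [dyadInd_one]
          unfold preInd sufInd
          rw [← hsh]
          have hb1 : (b : ℤ) + 1 = (b' : ℤ) + 1 + 2 ^ L := by rw [hcastb]; ring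
          have hb2 : (2 : ℤ) ^ (L + 1) = 2 ^ L + 2 ^ L := by rw [pow_succ]; ring
          rw [← hb1, ← hb2] at *
          linarith [h1, h2]
        rcases P_all L a (by omega) haL with hpA | hsA
        · rcases P_all L b' hb'0 hb'U with hpB | hsB
          · -- pre a, pre b' : suffix-complement on a, direct split
            have sfA := suf_of_pre (le_of_lt haL) hpA
            have shB := repOn_shift (Dm_subset L) hpB
            have hd : Disjoint (dyadicIdx L) ((Dm L).image (shiftIdx L)) :=
              image_shift_disjoint (Dm_subset L)
            have hcomb := repOn_addMul hd 1 (Or.inl rfl) sfA shB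
            refine repOn_mono ?_ (by omega) (repOn_congr hcomb ?_)
            · apply Finset.union_subset
              · exact dyadicIdx_subset (by omega)
              · exact (image_shift_subset (Dm_subset L)).trans (Dm_subset (L + 1))
            · intro x
              rw [hsplit x]
              push_cast
              ring
          · -- pre a, suf b' : global complement
            have X1 : RepOn {((1 : ℕ), L + 1)} 1 (dyadInd (1, L + 1)) :=
              repOn_single (Finset.mem_singleton_self _)
            have X3 := repOn_shift (Dm_subset L) hsB
            have hd1 : Disjoint (Dm L) ((Dm L).image (shiftIdx L)) :=
              (image_shift_disjoint (Dm_subset L)).mono_left (Dm_subset L)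
            have Y := repOn_addMul hd1 1 (Or.inl rfl) hpA X3
            have hd2 : Disjoint {((1 : ℕ), L + 1)} (Dm L ∪ (Dm L).image (shiftIdx L)) := by
              rw [Finset.disjoint_singleton_left, Finset.mem_union]
              rintro (h | h)
              · have := level_le_of_mem (Dm_subset L h)
                simp at this
              · exact not_mem_image_shift_of_fst_one (Dm_subset L) rfl h
            have Z := repOn_addMul hd2 (-1) (Or.inr rfl) X1 Y
            refine repOn_mono ?_ (by omega) (repOn_congr Z ?_)
            · apply Finset.union_subset
              · exact Finset.singleton_subset_iff.2 (top_mem (le_refl (L + 1)))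
              · apply Finset.union_subset
                · exact (Dm_subset L).trans (dyadicIdx_subset (by omega))
                · exact (image_shift_subset (Dm_subset L)).trans (Dm_subset (L + 1))
            · intro x
              rw [hcomp x]
              push_cast
              ring
        · -- suf a : direct split with full prefix on b'
          have pfB := prefix_full L b' hb'0 hb'U
          have shB := repOn_shift (le_refl (dyadicIdx L)) pfB
          have hd : Disjoint (Dm L) ((dyadicIdx L).image (shiftIdx L)) :=
            (image_shift_disjoint (le_refl _)).mono_left (Dm_subset L)
          have hcomb := repOn_addMul hd 1 (Or.inl rfl) hsA shB
          refine repOn_mono ?_ (by omega) (repOn_congr hcomb ?_)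
          · apply Finset.union_subset
            · exact (Dm_subset L).trans (dyadicIdx_subset (by omega))
            · exact (image_shift_subset (le_refl _)).trans (Dm_subset (L + 1))
          · intro x
            rw [hsplit x]
            push_cast
            ring

theorem stmt3 (L : ℕ) (t1 t2 : ℤ) (h1 : 0 ≤ t1) (h12 : t1 < t2) (h2 : t2 ≤ 2 ^ L) :
    ∃ χ : ℕ × ℕ → ℤ,
      (∀ p, χ p = -1 ∨ χ p = 0 ∨ χ p = 1) ∧
      ((dyadicIdx L).filter (fun p => χ p ≠ 0)).card ≤ L + 1 ∧
      ∀ x : ℤ, intervalInd (t1 + 1) t2 x =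
        ∑ p ∈ dyadicIdx L, (χ p : ℝ) *
          intervalInd (((p.1 : ℤ) - 1) * 2 ^ p.2 + 1) ((p.1 : ℤ) * 2 ^ p.2) x := by
  set a := t1.toNat with ha
  set b := t2.toNat with hb
  have hca : (a : ℤ) = t1 := Int.toNat_of_nonneg h1
  have hcb : (b : ℤ) = t2 := Int.toNat_of_nonneg (by omega)
  have hab : a < b := by omega
  have hbL : b ≤ 2 ^ L := by
    have : (b : ℤ) ≤ ((2 ^ L : ℕ) : ℤ) := by rw [cast_two_pow]; omega
    exact_mod_cast this
  obtain ⟨s, σ, hs, hc, hv, he⟩ := gen L a b hab hbL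
  refine ⟨fun p => if p ∈ s then σ p else 0, ?_, ?_, ?_⟩
  · intro p
    by_cases hp : p ∈ s
    · rcases hv p hp with h | h <;> simp [hp, h]
    · simp [hp]
  · refine le_trans (Finset.card_le_card ?_) hc
    intro p hp
    rw [Finset.mem_filter] at hp
    by_contra hps
    exact hp.2 (by simp [hps])
  · intro x
    have hL : intervalInd (t1 + 1) t2 x = intervalInd ((a : ℤ) + 1) (b : ℤ) x := by
      rw [hca, hcb]
    rw [hL]
    have he' := he x
    simp only [] at he'
    rw [he']
    rw [← Finset.sum_subset hs (fun p _ hps => by simp [hps, dyadInd])]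
    apply Finset.sum_congr rfl
    intro p hp
    simp only [hp, if_true, dyadInd]
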